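/- Let R be a finite ring with unity and let I ⊊ J be left ideals of R. If I cannot be expressed as an intersection of some maximal R-left ideals of J (i.e., there is no nonempty subset E ⊆ M_R(J) with ⋂_{M∈E} M = I), then μ_R(K,J) = 0 for every left ideal K of R with K ⊆ I. -/

import Mathlib

open scoped BigOperators
open Classical

variable {R : Type*}

/-- The left ideal of `R` generated by `x`, i.e. `(x)_ℓ`. -/
def lgen [Ring R] (x : R) : Submodule R R := Submodule.span R {x}

/-- `[x]_ℓ = {y : (y)_ℓ = (x)_ℓ}`. -/
def classL [Ring R] (x : R) : Set R := {y | lgen y = lgen x}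

/-- The character sum `C_χ(x) = ∑_{s ∈ [x]_ℓ} χ(s)`. -/
noncomputable def CchiL [Ring R] (χ : AddChar R ℂ) (x : R) : ℂ :=
  ∑ᶠ s ∈ classL x, χ s

/-- The set `M_R(J)` of maximal `R`-left ideals of `J`. -/
def maxROf [Ring R] (J : Submodule R R) : Set (Submodule R R) :=
  {M | M < J ∧ ∀ I' : Submodule R R, M < I' → ¬ I' < J}

/-- The set `M_R(J, K)` of maximal `R`-left ideals of `J` containing `K`. -/
def maxROfAbove [Ring R] (J K : Submodule R R) : Set (Submodule R R) :=
  {M | M ∈ maxROf J ∧ K ≤ M}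

/-- Intersection of the family `E` of left ideals, with the convention that the
empty intersection is `J`. -/
noncomputable def interIn [Ring R] (J : Submodule R R) (E : Set (Submodule R R)) :
    Submodule R R :=
  if E = ∅ then J else sInf E

/-- The Möbius function `μ_R(I, J)` on left ideals of `R`. -/
noncomputable def muR [Ring R] (I J : Submodule R R) : ℤ :=
  if I = J then 1
  else if I < J ∧ ∃ E : Set (Submodule R R),
      E ⊆ maxROf J ∧ E.Nonempty ∧ interIn J E = I then
    (Nat.card {E : Set (Submodule R R) //
        E ⊆ maxROf J ∧ interIn J E = I ∧ Even (Nat.card E)} : ℤ)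
      - (Nat.card {E : Set (Submodule R R) //
        E ⊆ maxROf J ∧ interIn J E = I ∧ Odd (Nat.card E)} : ℤ)
  else 0

/-- The function `φ_R(I, J)` on left ideals of `R`. -/
noncomputable def phiR [Ring R] (I J : Submodule R R) : ℂ :=
  if I = J then 1
  else if I < J ∧ ∃ E : Set (Submodule R R),
      E ⊆ maxROf J ∧ E.Nonempty ∧ interIn J E = I then
    ∏ᶠ M ∈ maxROfAbove J I, ((Nat.card J : ℂ) / (Nat.card M : ℂ) - 1)
  else 1



section LatticeLemmas

variable {α : Type*}

lemma exists_coatom_between [PartialOrder α] [Finite α] {I J : α} (h : I < J) :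
    ∃ M, M ⋖ J ∧ I ≤ M := by
  obtain ⟨M, hM, hmax⟩ := Set.Finite.exists_maximalFor id {X | I ≤ X ∧ X < J}
    (Set.toFinite _) ⟨I, le_refl I, h⟩
  refine ⟨M, ⟨hM.2, fun c hMc hcJ => ?_⟩, hM.1⟩
  exact lt_irrefl _ (lt_of_lt_of_le hMc (hmax ⟨le_trans hM.1 hMc.le, hcJ⟩ hMc.le))

lemma sInf_coatoms_above [CompleteLattice α] [IsModularLattice α] [Finite α]
    (J : α) (E : Set α) :
    E.Nonempty → (∀ M ∈ E, M ⋖ J) → ∀ I : α, sInf E ≤ I → I < J →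
      sInf {M | M ⋖ J ∧ I ≤ M} = I := by
  refine Set.Finite.induction_on E (Set.toFinite E)
    (motive := fun E _ => E.Nonempty → (∀ M ∈ E, M ⋖ J) → ∀ I : α, sInf E ≤ I → I < J →
      sInf {M | M ⋖ J ∧ I ≤ M} = I)
    (by rintro ⟨x, hx⟩; exact absurd hx (Set.notMem_empty x)) ?_
  rintro M₀ E₀ hM₀E₀ hfinE₀ IH - hcoat I hKI hIJ
  have hM₀ : M₀ ⋖ J := hcoat M₀ (Set.mem_insert _ _)
  -- Case A : the statement for elements below M₀
  have caseA : ∀ I' : α, sInf (insert M₀ E₀) ≤ I' → I' < J → I' ≤ M₀ →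
      sInf {M | M ⋖ J ∧ I' ≤ M} = I' := by
    intro I' hKI' hI'J hI'M₀
    set L := sInf {M | M ⋖ J ∧ I' ≤ M} with hLdef
    have hIL : I' ≤ L := le_sInf fun M hM => hM.2
    have hLM₀ : L ≤ M₀ := sInf_le ⟨hM₀, hI'M₀⟩
    rcases Set.eq_empty_or_nonempty E₀ with hE₀ | hE₀ne
    · subst hE₀
      rw [sInf_insert, sInf_empty, inf_top_eq] at hKI'
      exact le_antisymm (hLM₀.trans hKI') hIL
    · have hLK : L ⊓ sInf E₀ ≤ I' := by
        calc L ⊓ sInf E₀ ≤ M₀ ⊓ sInf E₀ := inf_le_inf_right _ hLM₀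
          _ ≤ I' := by rwa [sInf_insert] at hKI'
      have key : L ≤ I' ⊔ sInf E₀ := by
        by_cases hJ : I' ⊔ sInf E₀ = J
        · rw [hJ]; exact hLM₀.trans hM₀.1.le
        · have hE₀J : sInf E₀ ≤ J := by
            obtain ⟨M, hM⟩ := hE₀ne
            exact (sInf_le hM).trans (hcoat M (Set.mem_insert_of_mem _ hM)).1.le
          have hlt : I' ⊔ sInf E₀ < J := lt_of_le_of_ne (sup_le hI'J.le hE₀J) hJ
          have hIH := IH hE₀ne (fun M hM => hcoat M (Set.mem_insert_of_mem _ hM))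
            (I' ⊔ sInf E₀) le_sup_right hlt
          rw [← hIH]
          exact sInf_le_sInf fun M hM => ⟨hM.1, le_trans le_sup_left hM.2⟩
      have h1 : (I' ⊔ sInf E₀) ⊓ L = L := inf_eq_right.mpr key
      rw [sup_inf_assoc_of_le _ hIL] at h1
      refine le_antisymm ?_ hIL
      rw [← h1]
      exact sup_le le_rfl ((inf_comm (sInf E₀) L) ▸ hLK)
  by_cases hIM₀ : I ≤ M₀
  · exact caseA I hKI hIJ hIM₀
  · have hsup : I ⊔ M₀ = J := by
      have h1 : M₀ < I ⊔ M₀ :=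
        lt_of_le_of_ne le_sup_right (fun he => hIM₀ (he ▸ le_sup_left))
      by_contra hne
      exact hM₀.2 h1 (lt_of_le_of_ne (sup_le hIJ.le hM₀.1.le) hne)
    have hKI' : sInf (insert M₀ E₀) ≤ I ⊓ M₀ :=
      le_inf hKI (sInf_le (Set.mem_insert _ _))
    have hI'J : I ⊓ M₀ < J := lt_of_le_of_lt inf_le_right hM₀.1
    have hA := caseA (I ⊓ M₀) hKI' hI'J inf_le_right
    set L := sInf {M | M ⋖ J ∧ I ≤ M} with hLdef
    have hIL : I ≤ L := le_sInf fun M hM => hM.2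
    obtain ⟨Mw, hMw, hIMw⟩ := exists_coatom_between hIJ
    have hLJ : L ≤ J := (sInf_le (Set.mem_setOf.mpr ⟨hMw, hIMw⟩)).trans hMw.1.le
    have hkey : L ⊓ M₀ ≤ I ⊓ M₀ := by
      rw [← hA]
      refine le_sInf ?_
      rintro Ms ⟨hMs, hI'Ms⟩
      by_cases h1 : I ≤ Ms
      · exact le_trans inf_le_left (sInf_le ⟨hMs, h1⟩)
      by_cases h2 : Ms = M₀
      · rw [h2]; exact inf_le_right
      have hM₀Ms : ¬ M₀ ≤ Ms := by
        intro hle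
        rcases lt_or_eq_of_le hle with hlt | he
        · exact hM₀.2 hlt hMs.1
        · exact h2 he.symm
      have hMsM₀ : ¬ Ms ≤ M₀ := by
        intro hle
        rcases lt_or_eq_of_le hle with hlt | he
        · exact hMs.2 hlt hM₀.1
        · exact h2 he
      have hsupMM : M₀ ⊔ Ms = J := by
        have h1' : M₀ < M₀ ⊔ Ms :=
          lt_of_le_of_ne le_sup_left
            (fun he => hMsM₀ (le_sup_right.trans he.ge))
        by_contra hne
        exact hM₀.2 h1' (lt_of_le_of_ne (sup_le hM₀.1.le hMs.1.le) hne)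
      have cover1 : M₀ ⊓ Ms ⋖ M₀ :=
        inf_covBy_of_covBy_sup_right (by rw [hsupMM]; exact hMs)
      have hI'le : I ⊓ M₀ ≤ Ms ⊓ M₀ := le_inf hI'Ms inf_le_right
      have hNM₀ : ((Ms ⊓ M₀) ⊔ I) ⊓ M₀ = Ms ⊓ M₀ := by
        rw [sup_inf_assoc_of_le I inf_le_right]
        exact sup_eq_left.mpr hI'le
      have cover2 : (Ms ⊓ M₀) ⊔ I ⋖ J := by
        have hcov : M₀ ⊓ ((Ms ⊓ M₀) ⊔ I) ⋖ M₀ := by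
          rw [inf_comm, hNM₀, inf_comm]; exact cover1
        have hc2 := covBy_sup_of_inf_covBy_left hcov
        have hsup2 : M₀ ⊔ ((Ms ⊓ M₀) ⊔ I) = J := by
          have habs : M₀ ⊔ (Ms ⊓ M₀) = M₀ := sup_eq_left.mpr inf_le_right
          rw [← sup_assoc, habs, ← hsup, sup_comm]
        rwa [hsup2] at hc2
      have hLN : L ≤ (Ms ⊓ M₀) ⊔ I := sInf_le ⟨cover2, le_sup_right⟩
      calc L ⊓ M₀ ≤ ((Ms ⊓ M₀) ⊔ I) ⊓ M₀ := inf_le_inf_right _ hLN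
        _ = Ms ⊓ M₀ := hNM₀
        _ ≤ Ms := inf_le_left
    have hfin : L = I ⊔ (M₀ ⊓ L) := by
      have h1 : (I ⊔ M₀) ⊓ L = L := by rw [hsup]; exact inf_eq_right.mpr hLJ
      rw [sup_inf_assoc_of_le M₀ hIL] at h1
      exact h1.symm
    refine le_antisymm ?_ hIL
    rw [hfin]
    exact sup_le le_rfl (((inf_comm M₀ L) ▸ hkey).trans inf_le_left)

end LatticeLemmas

theorem stmt10 [Ring R] [Fintype R] (I J : Submodule R R) (hIJ : I < J)
    (h : ¬ ∃ E : Set (Submodule R R), E ⊆ maxROf J ∧ E.Nonempty ∧ interIn J E = I) :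
    ∀ K : Submodule R R, K ≤ I → muR K J = 0 := by
  intro K hKI
  haveI : Finite (Submodule R R) :=
    Finite.of_injective (fun p => (p : Set R)) SetLike.coe_injective
  have hKJ : K < J := lt_of_le_of_lt hKI hIJ
  have hmax : maxROf J = {M : Submodule R R | M ⋖ J} := by
    ext M
    exact ⟨fun hh => ⟨hh.1, fun c hc => hh.2 c hc⟩, fun hh => ⟨hh.1, fun c hc => hh.2 hc⟩⟩
  have hrep : ¬(K < J ∧ ∃ E : Set (Submodule R R),
      E ⊆ maxROf J ∧ E.Nonempty ∧ interIn J E = K) := by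
    rintro ⟨-, E, hEsub, hEne, hEK⟩
    rw [interIn, if_neg hEne.ne_empty] at hEK
    apply h
    obtain ⟨Mw, hMw, hIMw⟩ := exists_coatom_between hIJ
    have hwmem : Mw ∈ {M : Submodule R R | M ⋖ J ∧ I ≤ M} := ⟨hMw, hIMw⟩
    refine ⟨{M | M ⋖ J ∧ I ≤ M}, ?_, ⟨Mw, hwmem⟩, ?_⟩
    · intro M hM; rw [hmax]; exact hM.1
    · rw [interIn, if_neg (Set.nonempty_iff_ne_empty.mp ⟨Mw, hwmem⟩)]
      refine sInf_coatoms_above J E hEne ?_ I (by rw [hEK]; exact hKI) hIJ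
      intro M hM
      have := hEsub hM
      rwa [hmax] at this
  rw [muR, if_neg hKJ.ne, if_neg hrep]
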